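/- Let $(S,I)$ be a positive classical solution of the equilibrium system $d_I\Delta I+\beta(x)\frac{SI}{S+I}-\gamma(x)I=0$ coupled with $\nabla\cdot(d_S\nabla S+\chi S\nabla I)-\beta(x)\frac{SI}{S+I}+\gamma(x)I+\Lambda(x)-S=0$ on a bounded smooth domain $\Omega$ with homogeneous Neumann boundary conditions. Then $\int_\Omega S\,dx=\int_\Omega\Lambda\,dx$, and moreover $\gamma_*\int_\Omega I\,dx\le\beta^*\int_\Omega\Lambda\,dx$, where $\gamma_*=\min_{\overline\Omega}\gamma>0$ and $\beta^*=\max_{\overline\Omega}\beta$. -/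

import Mathlib

open MeasureTheory

/-- The divergence of a vector field on `EuclideanSpace ℝ (Fin n)`:
`div F x = ∑ i ∂ᵢ Fᵢ (x)`. -/
noncomputable def vdiv {n : ℕ} (F : EuclideanSpace ℝ (Fin n) → EuclideanSpace ℝ (Fin n))
    (x : EuclideanSpace ℝ (Fin n)) : ℝ :=
  ∑ i : Fin n, (fderiv ℝ F x (EuclideanSpace.single i (1 : ℝ))) i

/-- The Laplacian `Δf = ∇·(∇f)`. -/
noncomputable def lap {n : ℕ} (f : EuclideanSpace ℝ (Fin n) → ℝ)
    (x : EuclideanSpace ℝ (Fin n)) : ℝ :=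
  vdiv (fun y => gradient f y) x

lemma vdiv_continuous {n : ℕ} {F : EuclideanSpace ℝ (Fin n) → EuclideanSpace ℝ (Fin n)}
    (hF : ContDiff ℝ 1 F) : Continuous (vdiv F) := by
  have h : Continuous (fderiv ℝ F) := hF.continuous_fderiv one_ne_zero
  exact continuous_finset_sum _ fun i _ =>
    (EuclideanSpace.proj i).continuous.comp
      (((ContinuousLinearMap.apply ℝ _ (EuclideanSpace.single i (1:ℝ))).continuous).comp h)

lemma gradient_contDiff {n : ℕ} {f : EuclideanSpace ℝ (Fin n) → ℝ} (hf : ContDiff ℝ 2 f) :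
    ContDiff ℝ 1 (fun y => gradient f y) := by
  have h := hf.fderiv_right (m := 1) (by norm_num)
  exact ((InnerProductSpace.toDual ℝ
    (EuclideanSpace ℝ (Fin n))).symm.toContinuousLinearEquiv.contDiff).comp h

theorem stmt_16 {n : ℕ} (Ω : Set (EuclideanSpace ℝ (Fin n)))
    (hΩopen : IsOpen Ω) (hΩbdd : Bornology.IsBounded Ω) (hΩm : MeasurableSet Ω)
    (ν : EuclideanSpace ℝ (Fin n) → EuclideanSpace ℝ (Fin n))
    -- the divergence theorem on the bounded smooth domain `Ω` with outward unit
    -- normal `ν`: a `C¹` vector field with vanishing normal trace has vanishing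
    -- integral of its divergence
    (hdivthm : ∀ F : EuclideanSpace ℝ (Fin n) → EuclideanSpace ℝ (Fin n),
      ContDiff ℝ 1 F → (∀ x ∈ frontier Ω, inner ℝ (F x) (ν x) = (0 : ℝ)) →
      (∫ x in Ω, vdiv F x) = 0)
    (dS dI χ : ℝ) (hdS : 0 < dS) (hdI : 0 < dI) (hχ : 0 < χ)
    (S I β γ Λ : EuclideanSpace ℝ (Fin n) → ℝ)
    (hS : ContDiff ℝ 2 S) (hI : ContDiff ℝ 2 I)
    (hβ : Continuous β) (hγ : Continuous γ) (hΛ : Continuous Λ)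
    (hSpos : ∀ x ∈ closure Ω, 0 < S x) (hIpos : ∀ x ∈ closure Ω, 0 < I x)
    -- the S-equation: ∇·(d_S ∇S + χ S ∇I) - β SI/(S+I) + γ I + Λ - S = 0 in Ω
    (heqS : ∀ x ∈ Ω,
      vdiv (fun y => dS • gradient S y + (χ * S y) • gradient I y) x
        - β x * (S x * I x / (S x + I x)) + γ x * I x + Λ x - S x = 0)
    -- the I-equation: d_I ΔI + β SI/(S+I) - γ I = 0 in Ω
    (heqI : ∀ x ∈ Ω,
      dI * lap I x + β x * (S x * I x / (S x + I x)) - γ x * I x = 0)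
    -- homogeneous Neumann boundary conditions
    (hbcS : ∀ x ∈ frontier Ω, inner ℝ (gradient S x) (ν x) = (0 : ℝ))
    (hbcI : ∀ x ∈ frontier Ω, inner ℝ (gradient I x) (ν x) = (0 : ℝ))
    (γlow βup : ℝ) (hγlow : 0 < γlow)
    (hγ_min : ∀ x ∈ closure Ω, γlow ≤ γ x) (hβ_max : ∀ x ∈ closure Ω, β x ≤ βup) :
    (∫ x in Ω, S x) = ∫ x in Ω, Λ x ∧
    γlow * ∫ x in Ω, I x ≤ βup * ∫ x in Ω, Λ x := by
  have hK : IsCompact (closure Ω) := hΩbdd.isCompact_closure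
  have hsub : Ω ⊆ closure Ω := subset_closure
  have integ : ∀ {f : EuclideanSpace ℝ (Fin n) → ℝ}, ContinuousOn f (closure Ω) →
      IntegrableOn f Ω := fun hf => (hf.integrableOn_compact hK).mono_set hsub
  set t : EuclideanSpace ℝ (Fin n) → ℝ := fun x => S x * I x / (S x + I x) with ht
  have hSIne : ∀ x ∈ closure Ω, S x + I x ≠ 0 := fun x hx =>
    (add_pos (hSpos x hx) (hIpos x hx)).ne'
  have htcont : ContinuousOn t (closure Ω) :=
    ((hS.continuous.continuousOn.mul hI.continuous.continuousOn).div
      (hS.continuous.continuousOn.add hI.continuous.continuousOn) hSIne)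
  set F1 : EuclideanSpace ℝ (Fin n) → EuclideanSpace ℝ (Fin n) :=
    fun y => dS • gradient S y + (χ * S y) • gradient I y with hF1def
  have hF1 : ContDiff ℝ 1 F1 :=
    ((contDiff_const (c := dS)).smul (gradient_contDiff hS)).add
      (((contDiff_const (c := χ)).mul (hS.of_le one_le_two)).smul (gradient_contDiff hI))
  have hF1div : (∫ x in Ω, vdiv F1 x) = 0 := by
    refine hdivthm F1 hF1 fun x hx => ?_
    simp only [hF1def, inner_add_left, real_inner_smul_left, hbcS x hx, hbcI x hx]
    ring
  have hlapdiv : (∫ x in Ω, lap I x) = 0 :=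
    hdivthm _ (gradient_contDiff hI) hbcI
  have iS : IntegrableOn S Ω := integ hS.continuous.continuousOn
  have iI : IntegrableOn I Ω := integ hI.continuous.continuousOn
  have iΛ : IntegrableOn Λ Ω := integ hΛ.continuousOn
  have iγI : IntegrableOn (fun x => γ x * I x) Ω :=
    integ (hγ.continuousOn.mul hI.continuous.continuousOn)
  have iβt : IntegrableOn (fun x => β x * t x) Ω := integ (hβ.continuousOn.mul htcont)
  have ivd : IntegrableOn (vdiv F1) Ω := integ (vdiv_continuous hF1).continuousOn
  have ilap : IntegrableOn (lap I) Ω := integ (vdiv_continuous (gradient_contDiff hI)).continuousOn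
  -- Part 1
  have key1 : (∫ x in Ω, S x) = ∫ x in Ω, (vdiv F1 x + dI * lap I x + Λ x) := by
    refine setIntegral_congr_fun hΩm fun x hx => ?_
    have h1 := heqS x hx
    have h2 := heqI x hx
    linarith
  have part1 : (∫ x in Ω, S x) = ∫ x in Ω, Λ x := by
    have hdIlap : (∫ x in Ω, dI * lap I x) = 0 := by
      rw [integral_const_mul, hlapdiv, mul_zero]
    have e1 : (∫ x in Ω, (vdiv F1 x + dI * lap I x + Λ x))
        = (∫ x in Ω, (vdiv F1 x + dI * lap I x)) + ∫ x in Ω, Λ x :=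
      integral_add (ivd.add (ilap.const_mul dI)) iΛ
    have e2 : (∫ x in Ω, (vdiv F1 x + dI * lap I x))
        = (∫ x in Ω, vdiv F1 x) + ∫ x in Ω, dI * lap I x :=
      integral_add ivd (ilap.const_mul dI)
    rw [key1, e1, e2, hdIlap, hF1div]
    ring
  refine ⟨part1, ?_⟩
  -- ∫ γ I = ∫ β t
  have hγβ : (∫ x in Ω, γ x * I x) = ∫ x in Ω, β x * t x := by
    have : (∫ x in Ω, γ x * I x) = ∫ x in Ω, (dI * lap I x + β x * t x) := by
      refine setIntegral_congr_fun hΩm fun x hx => ?_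
      have h2 := heqI x hx
      linarith
    have hdIlap : (∫ x in Ω, dI * lap I x) = 0 := by
      rw [integral_const_mul, hlapdiv, mul_zero]
    have e1 : (∫ x in Ω, (dI * lap I x + β x * t x))
        = (∫ x in Ω, dI * lap I x) + ∫ x in Ω, β x * t x :=
      integral_add (ilap.const_mul dI) iβt
    rw [this, e1, hdIlap]
    ring
  have h1 : γlow * ∫ x in Ω, I x ≤ ∫ x in Ω, γ x * I x := by
    rw [← integral_const_mul]
    exact setIntegral_mono_on (iI.const_mul γlow) iγI hΩm fun x hx =>
      mul_le_mul_of_nonneg_right (hγ_min x (hsub hx)) (hIpos x (hsub hx)).le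
  have htnonneg : ∀ x ∈ Ω, 0 ≤ t x := fun x hx =>
    div_nonneg (mul_nonneg (hSpos x (hsub hx)).le (hIpos x (hsub hx)).le)
      (add_pos (hSpos x (hsub hx)) (hIpos x (hsub hx))).le
  by_cases hβup : 0 ≤ βup
  · have h2 : (∫ x in Ω, β x * t x) ≤ βup * ∫ x in Ω, S x := by
      rw [← integral_const_mul]
      refine setIntegral_mono_on iβt (iS.const_mul βup) hΩm fun x hx => ?_
      have hxc := hsub hx
      have htS : t x ≤ S x := by
        rw [ht]
        rw [div_le_iff₀ (add_pos (hSpos x hxc) (hIpos x hxc))]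
        nlinarith [hSpos x hxc, hIpos x hxc]
      calc β x * t x ≤ βup * t x :=
            mul_le_mul_of_nonneg_right (hβ_max x hxc) (htnonneg x hx)
        _ ≤ βup * S x := mul_le_mul_of_nonneg_left htS hβup
    rw [← part1]
    linarith
  · -- βup < 0 forces the domain to be null
    push_neg at hβup
    have h2 : (∫ x in Ω, β x * t x) ≤ 0 := by
      have : (∫ x in Ω, β x * t x) ≤ ∫ x in Ω, βup * t x := by
        refine setIntegral_mono_on iβt ((integ htcont).const_mul βup) hΩm fun x hx =>
          mul_le_mul_of_nonneg_right (hβ_max x (hsub hx)) (htnonneg x hx)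
      have h3 : (0:ℝ) ≤ ∫ x in Ω, t x :=
        setIntegral_nonneg hΩm htnonneg
      rw [integral_const_mul] at this
      nlinarith
    have hIint0 : (∫ x in Ω, I x) = 0 := by
      have hnn : (0:ℝ) ≤ ∫ x in Ω, I x :=
        setIntegral_nonneg hΩm fun x hx => (hIpos x (hsub hx)).le
      nlinarith
    have hae : I =ᵐ[volume.restrict Ω] 0 := by
      refine (integral_eq_zero_iff_of_nonneg_ae ?_ iI).mp hIint0
      exact (ae_restrict_iff' hΩm).mpr (Filter.Eventually.of_forall
        fun x hx => (hIpos x (hsub hx)).le)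
    have hμ : volume.restrict Ω Ω = 0 := by
      have hnull : volume.restrict Ω {x | I x ≠ 0} = 0 := hae
      have : Ω ⊆ {x | I x ≠ 0} := fun x hx => (hIpos x (hsub hx)).ne'
      exact le_antisymm (le_trans (measure_mono this) hnull.le) bot_le
    have hrez : volume.restrict Ω = 0 := by
      rw [Measure.restrict_eq_zero]
      rwa [Measure.restrict_apply_self] at hμ
    rw [← part1]
    simp [hrez]
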